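/- Resolvent divergence criterion for the Lyapunov exponent: Let V be a finite nonempty index set and A an irreducible Metzler real matrix indexed by V with Perron root λ* (λ* is an eigenvalue of A and every complex eigenvalue of A has real part at most λ*). Then for every real α and all indices σ, σ' ∈ V, the extended-real integral ∫₀^∞ ENNReal.ofReal( (exp(t·(A − α·1)))_{σ',σ} ) dt equals +∞ if and only if α ≤ λ*. In particular, the conditions 'λ* ≥ α', 'the integral diverges for some pair (σ,σ')', and 'the integral diverges for every pair (σ,σ')' are equivalent. -/

import Mathlib

open scoped ENNReal

/-- A complex number `μ` is an eigenvalue of the real matrix `M`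
(via its complexification). -/
def Matrix.IsComplexEigenvalue {V : Type*} [Fintype V] (M : Matrix V V ℝ) (μ : ℂ) : Prop :=
  ∃ v : V → ℂ, v ≠ 0 ∧ (M.map (Complex.ofReal)).mulVec v = μ • v

/-- `lam` is the Perron root (Lyapunov exponent) of `A`: it is a real eigenvalue
of `A` and dominates the real part of every complex eigenvalue. -/
def Matrix.IsPerronRoot {V : Type*} [Fintype V] (A : Matrix V V ℝ) (lam : ℝ) : Prop :=
  (∃ v : V → ℝ, v ≠ 0 ∧ A.mulVec v = lam • v) ∧
  ∀ μ : ℂ, A.IsComplexEigenvalue μ → μ.re ≤ lam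

/-- `A` is a Metzler matrix: all off-diagonal entries are nonnegative. -/
def Matrix.IsMetzler {V : Type*} (A : Matrix V V ℝ) : Prop :=
  ∀ σ σ' : V, σ ≠ σ' → 0 ≤ A σ' σ

/-- `A` is irreducible: any two distinct indices are connected by a chain of
strictly positive transition entries. -/
def Matrix.IsIrreducibleMetzlerChain {V : Type*} (A : Matrix V V ℝ) : Prop :=
  ∀ σ σ' : V, σ ≠ σ' → Relation.TransGen (fun x y => x ≠ y ∧ 0 < A y x) σ σ'

set_option linter.unusedSectionVars false

namespace ResolventAux

open NormedSpace MeasureTheory Set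

attribute [local instance] Matrix.linftyOpNormedAddCommGroup Matrix.linftyOpNormedRing
  Matrix.linftyOpNormedAlgebra

variable {V : Type*} [Fintype V] [DecidableEq V]

section Entries

variable {𝕂 : Type*} [RCLike 𝕂]

lemma summable_exp_entry (M : Matrix V V 𝕂) (i j : V) :
    Summable (fun n : ℕ => ((n.factorial : 𝕂))⁻¹ • (M ^ n) i j) := by
  have hs : Summable (fun n : ℕ => ((n.factorial : 𝕂))⁻¹ • M ^ n) := expSeries_summable' M
  have hci : Continuous (fun X : Matrix V V 𝕂 => X i) := continuous_apply (A := fun _ : V => V → 𝕂) i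
  have h1 := hs.map (ContinuousLinearMap.proj i : (Matrix V V 𝕂) →L[𝕂] (V → 𝕂)) hci
  have h2 := h1.map (ContinuousLinearMap.proj j : (V → 𝕂) →L[𝕂] 𝕂) (continuous_apply j)
  exact h2

lemma exp_entry (M : Matrix V V 𝕂) (i j : V) :
    exp M i j = ∑' n : ℕ, ((n.factorial : 𝕂))⁻¹ • (M ^ n) i j := by
  rw [exp_eq_tsum 𝕂]
  have hs : Summable (fun n : ℕ => ((n.factorial : 𝕂))⁻¹ • M ^ n) := expSeries_summable' M
  have hci : Continuous (fun X : Matrix V V 𝕂 => X i) := continuous_apply (A := fun _ : V => V → 𝕂) i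
  have hs2 : Summable (fun n : ℕ => (((n.factorial : 𝕂))⁻¹ • M ^ n) i) := by
    have := hs.map (ContinuousLinearMap.proj i : (Matrix V V 𝕂) →L[𝕂] (V → 𝕂)) hci
    exact this
  show (∑' n : ℕ, ((n.factorial : 𝕂))⁻¹ • M ^ n) i j = _
  have e1 := tsum_apply (f := fun n : ℕ => (((n.factorial : 𝕂))⁻¹ • M ^ n : V → V → 𝕂)) (x := i) hs
  have e2 := tsum_apply (x := j) hs2
  exact (congrFun e1 j).trans e2

lemma exp_mulVec_eq_tsum (M : Matrix V V 𝕂) (w : V → 𝕂) (j : V) :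
    (exp M).mulVec w j = ∑' n : ℕ, ((n.factorial : 𝕂))⁻¹ • ((M ^ n).mulVec w j) := by
  have hsum : ∀ σ : V, Summable (fun n : ℕ => (((n.factorial : 𝕂))⁻¹ • (M ^ n) j σ) * w σ) :=
    fun σ => (summable_exp_entry M j σ).mul_right (w σ)
  have : (exp M).mulVec w j = ∑ σ : V, (exp M) j σ * w σ := rfl
  rw [this]
  have h1 : ∀ σ : V, (exp M) j σ * w σ
      = ∑' n : ℕ, (((n.factorial : 𝕂))⁻¹ • (M ^ n) j σ) * w σ := by
    intro σ
    rw [exp_entry, tsum_mul_right]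
  simp_rw [h1]
  rw [← Summable.tsum_finsetSum (fun σ _ => hsum σ)]
  congr 1
  funext n
  have : ((M ^ n).mulVec w) j = ∑ σ : V, (M ^ n) j σ * w σ := rfl
  rw [this, Finset.smul_sum]
  congr 1
  funext σ
  rw [smul_mul_assoc]

lemma exp_mulVec_of_pow_eq_zero (M : Matrix V V 𝕂) (w : V → 𝕂) {k : ℕ}
    (hk : (M ^ k).mulVec w = 0) (j : V) :
    (exp M).mulVec w j
      = ∑ n ∈ Finset.range k, ((n.factorial : 𝕂))⁻¹ • ((M ^ n).mulVec w j) := by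
  rw [exp_mulVec_eq_tsum]
  refine tsum_eq_sum ?_
  intro n hn
  have hnk : M ^ n = M ^ (n - k) * M ^ k := by
    rw [← pow_add]
    congr 1
    have := Finset.mem_range.not.mp hn
    omega
  have hz : (M ^ n).mulVec w = 0 := by
    rw [hnk, ← Matrix.mulVec_mulVec, hk, Matrix.mulVec_zero]
  rw [hz]
  simp

lemma exp_mulVec_eigen (M : Matrix V V 𝕂) (w : V → 𝕂) (μ : 𝕂)
    (hw : M.mulVec w = μ • w) : (exp M).mulVec w = exp μ • w := by
  have hpow : ∀ n : ℕ, (M ^ n).mulVec w = μ ^ n • w := by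
    intro n
    induction n with
    | zero => simp [Matrix.one_mulVec]
    | succ n ih =>
        rw [pow_succ', ← Matrix.mulVec_mulVec, ih, Matrix.mulVec_smul, hw, smul_smul, ← pow_succ]
  funext j
  rw [exp_mulVec_eq_tsum]
  have h1 : ∀ n : ℕ, ((n.factorial : 𝕂))⁻¹ • ((M ^ n).mulVec w j)
      = (((n.factorial : 𝕂))⁻¹ • μ ^ n) * w j := by
    intro n
    rw [hpow n]
    simp [smul_smul, smul_eq_mul, mul_assoc]
  simp_rw [h1]
  rw [tsum_mul_right, exp_eq_tsum 𝕂]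
  rfl

lemma exp_add_smul_one (M : Matrix V V 𝕂) (r : 𝕂) :
    exp (M + r • (1 : Matrix V V 𝕂)) = exp r • exp M := by
  have hcomm : Commute M (r • (1 : Matrix V V 𝕂)) := (Commute.one_right M).smul_right r
  rw [Matrix.exp_add_of_commute M (r • (1 : Matrix V V 𝕂)) hcomm]
  have h1 : exp (r • (1 : Matrix V V 𝕂)) = exp r • (1 : Matrix V V 𝕂) := by
    rw [Matrix.smul_one_eq_diagonal, Matrix.exp_diagonal, Pi.exp_def]
    rw [← Matrix.smul_one_eq_diagonal]
  rw [h1, mul_smul_comm, mul_one]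

end Entries

section Nonneg

lemma pow_entry_nonneg {M : Matrix V V ℝ} (hM : ∀ i j, 0 ≤ M i j) (n : ℕ) (i j : V) :
    0 ≤ (M ^ n) i j := by
  induction n generalizing i j with
  | zero =>
      rw [pow_zero, Matrix.one_apply]
      split <;> norm_num
  | succ n ih =>
      rw [pow_succ, Matrix.mul_apply]
      exact Finset.sum_nonneg fun k _ => mul_nonneg (ih i k) (hM k j)

lemma exp_entry_nonneg {M : Matrix V V ℝ} (hM : ∀ i j, 0 ≤ M i j) (i j : V) :
    0 ≤ exp M i j := by
  rw [exp_entry]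
  exact tsum_nonneg fun n => smul_nonneg (by positivity) (pow_entry_nonneg hM n i j)

lemma le_exp_entry {M : Matrix V V ℝ} (hM : ∀ i j, 0 ≤ M i j) (n : ℕ) (i j : V) :
    ((n.factorial : ℝ))⁻¹ • (M ^ n) i j ≤ exp M i j := by
  rw [exp_entry]
  exact Summable.le_tsum (summable_exp_entry M i j) n
    (fun m _ => smul_nonneg (by positivity) (pow_entry_nonneg hM m i j))

lemma mul_entry_le {X Y : Matrix V V ℝ} (hX : ∀ i j, 0 ≤ X i j) (hY : ∀ i j, 0 ≤ Y i j)
    (i k j : V) : X i k * Y k j ≤ (X * Y) i j := by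
  rw [Matrix.mul_apply]
  exact Finset.single_le_sum (f := fun a => X i a * Y a j)
    (fun a _ => mul_nonneg (hX _ _) (hY _ _)) (Finset.mem_univ k)

lemma mul_entry_nonneg {X Y : Matrix V V ℝ} (hX : ∀ i j, 0 ≤ X i j) (hY : ∀ i j, 0 ≤ Y i j)
    (i j : V) : 0 ≤ (X * Y) i j := by
  rw [Matrix.mul_apply]
  exact Finset.sum_nonneg fun a _ => mul_nonneg (hX _ _) (hY _ _)

lemma pow_entry_pos_of_chain {M : Matrix V V ℝ} (hM : ∀ i j, 0 ≤ M i j) {σ σ' : V}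
    (h : Relation.TransGen (fun x y => x ≠ y ∧ 0 < M y x) σ σ') :
    ∃ ℓ : ℕ, 0 < (M ^ ℓ) σ' σ := by
  induction h with
  | single h => exact ⟨1, by simpa [pow_one] using h.2⟩
  | tail hab hbc ih =>
      obtain ⟨ℓ, hl⟩ := ih
      refine ⟨ℓ + 1, ?_⟩
      rw [pow_succ', Matrix.mul_apply]
      refine Finset.sum_pos' (fun k _ => mul_nonneg (hM _ _) (pow_entry_nonneg hM _ _ _)) ?_
      exact ⟨_, Finset.mem_univ _, mul_pos hbc.2 hl⟩

lemma exp_entry_pos {M : Matrix V V ℝ} (hM : ∀ i j, 0 ≤ M i j)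
    (hchain : ∀ σ σ' : V, σ ≠ σ' → Relation.TransGen (fun x y => x ≠ y ∧ 0 < M y x) σ σ')
    {t : ℝ} (ht : 0 < t) (σ σ' : V) : 0 < exp (t • M) σ' σ := by
  have hM' : ∀ i j, 0 ≤ (t • M) i j := by
    intro i j
    have : (t • M) i j = t * M i j := rfl
    rw [this]
    exact mul_nonneg ht.le (hM i j)
  rcases eq_or_ne σ σ' with rfl | hne
  · calc (0:ℝ) < (((0:ℕ).factorial : ℝ))⁻¹ • ((t • M) ^ 0) σ σ := by
          simp [Matrix.one_apply_eq]
      _ ≤ _ := le_exp_entry hM' 0 σ σ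
  · have hchain' : Relation.TransGen (fun x y => x ≠ y ∧ 0 < (t • M) y x) σ σ' := by
      refine Relation.TransGen.mono ?_ _ _ (hchain σ σ' hne)
      intro x y hxy
      refine ⟨hxy.1, ?_⟩
      have : (t • M) y x = t * M y x := rfl
      rw [this]
      exact mul_pos ht hxy.2
    obtain ⟨ℓ, hℓ⟩ := pow_entry_pos_of_chain hM' hchain'
    calc (0:ℝ) < ((ℓ.factorial : ℝ))⁻¹ • ((t • M) ^ ℓ) σ' σ := by positivity
      _ ≤ _ := le_exp_entry hM' ℓ σ' σ

end Nonneg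

section Complexify

lemma map_ofReal_exp (M : Matrix V V ℝ) :
    (exp M).map Complex.ofReal = exp (M.map Complex.ofReal) := by
  have hcoe : (⇑(Complex.ofRealAm.mapMatrix (m := V)) : Matrix V V ℝ → Matrix V V ℂ)
      = fun X => X.map Complex.ofReal := by
    funext X
    exact AlgHom.mapMatrix_apply _ _
  have hcont : Continuous (Complex.ofRealAm.mapMatrix (m := V) :
      Matrix V V ℝ →ₐ[ℝ] Matrix V V ℂ) := by
    rw [hcoe]
    exact Continuous.matrix_map continuous_id Complex.continuous_ofReal
  have h := map_exp (Complex.ofRealAm.mapMatrix (m := V)) hcont M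
  rw [hcoe] at h
  simp only at h
  exact h

lemma map_ofReal_smul (t : ℝ) (A : Matrix V V ℝ) :
    (t • A).map Complex.ofReal = t • (A.map Complex.ofReal) := by
  ext i j
  simp [Matrix.map_apply, Complex.real_smul, Complex.ofReal_mul]

lemma isEig_of_genEig (A : Matrix V V ℝ) {μ : ℂ} {x : V → ℂ} {k : ℕ} (hx : x ≠ 0)
    (h : ((A.map Complex.ofReal - μ • (1 : Matrix V V ℂ)) ^ k).mulVec x = 0) :
    A.IsComplexEigenvalue μ := by
  induction k generalizing x with
  | zero =>
      rw [pow_zero, Matrix.one_mulVec] at h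
      exact absurd h hx
  | succ k ih =>
      set N := A.map Complex.ofReal - μ • (1 : Matrix V V ℂ) with hN
      by_cases hNx : N.mulVec x = 0
      · refine ⟨x, hx, ?_⟩
        have hNexp : N.mulVec x = (A.map Complex.ofReal).mulVec x - μ • x := by
          rw [hN, Matrix.sub_mulVec, Matrix.smul_mulVec, Matrix.one_mulVec]
        rw [hNexp] at hNx
        exact sub_eq_zero.mp hNx
      · refine ih hNx ?_
        rw [Matrix.mulVec_mulVec, ← pow_succ]
        exact h

lemma end_sub_pow_apply (Mc : Matrix V V ℂ) (μ : ℂ) (k : ℕ) (x : V → ℂ) :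
    ((Matrix.toLinAlgEquiv' Mc - μ • 1) ^ k) x
      = ((Mc - μ • (1 : Matrix V V ℂ)) ^ k).mulVec x := by
  have h : Matrix.toLinAlgEquiv' (Mc - μ • (1 : Matrix V V ℂ))
      = Matrix.toLinAlgEquiv' Mc - μ • 1 := by
    rw [map_sub, _root_.map_smul, map_one]
  rw [← h, ← map_pow]
  exact Matrix.toLinAlgEquiv'_apply _ _

lemma term_bound (Ac : Matrix V V ℂ) (μ : ℂ) (x : V → ℂ) {k : ℕ}
    (hk : ((Ac - μ • (1 : Matrix V V ℂ)) ^ k).mulVec x = 0) {t : ℝ} (ht : 0 ≤ t) (j : V) :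
    ‖(exp (t • Ac)).mulVec x j‖
      ≤ Real.exp (t * μ.re) * ∑ n ∈ Finset.range k,
          ((n.factorial : ℝ))⁻¹ * t ^ n * ‖((Ac - μ • (1 : Matrix V V ℂ)) ^ n).mulVec x j‖ := by
  set N := Ac - μ • (1 : Matrix V V ℂ) with hN
  have hsplit : t • Ac = t • N + ((t : ℂ) * μ) • (1 : Matrix V V ℂ) := by
    rw [hN]
    ext i j'
    simp only [Matrix.add_apply, Matrix.smul_apply, Matrix.sub_apply, Complex.real_smul,
      smul_eq_mul]
    ring
  have hNk : ((t • N) ^ k).mulVec x = 0 := by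
    rw [smul_pow, Matrix.smul_mulVec, hk, smul_zero]
  have hexp : (exp (t • Ac)).mulVec x j
      = Complex.exp ((t : ℂ) * μ) • ((exp (t • N)).mulVec x j) := by
    rw [hsplit, exp_add_smul_one, Matrix.smul_mulVec, Complex.exp_eq_exp_ℂ]
    rfl
  rw [hexp, norm_smul, Complex.norm_exp]
  have hre : ((t : ℂ) * μ).re = t * μ.re := by simp [Complex.mul_re]
  rw [hre]
  refine mul_le_mul_of_nonneg_left ?_ (Real.exp_nonneg _)
  rw [exp_mulVec_of_pow_eq_zero (t • N) x hNk j]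
  refine (norm_sum_le _ _).trans ?_
  apply Finset.sum_le_sum
  intro n _
  rw [smul_pow, Matrix.smul_mulVec]
  have h1 : ((t ^ n : ℝ) • (N ^ n).mulVec x) j = (t ^ n : ℝ) • ((N ^ n).mulVec x j) := rfl
  rw [norm_smul, h1, norm_smul]
  rw [norm_inv, RCLike.norm_natCast]
  rw [Real.norm_eq_abs, abs_pow, abs_of_nonneg ht, mul_assoc]

set_option maxHeartbeats 1000000 in
lemma entry_growth_bound (A : Matrix V V ℝ) (lam : ℝ)
    (hspec : ∀ μ : ℂ, A.IsComplexEigenvalue μ → μ.re ≤ lam) (σ σ' : V) :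
    ∃ (C : ℝ) (K : ℕ), 0 ≤ C ∧ ∀ t : ℝ, 0 ≤ t →
      exp (t • A) σ' σ ≤ C * (1 + t) ^ K * Real.exp (t * lam) := by
  classical
  set Ac := A.map Complex.ofReal with hAc
  set f : Module.End ℂ (V → ℂ) := Matrix.toLinAlgEquiv' Ac with hf
  have htop := Module.End.iSup_maxGenEigenspace_eq_top f
  set w : V → ℂ := Pi.single σ 1 with hw
  have hwmem : w ∈ ⨆ μ, f.maxGenEigenspace μ := htop ▸ Submodule.mem_top
  obtain ⟨c, hcmem, hcsum⟩ := (Submodule.mem_iSup_iff_exists_finsupp _ w).mp hwmem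
  choose kk hkk using fun μ => (Module.End.mem_maxGenEigenspace f μ (c μ)).mp (hcmem μ)
  have hkmat : ∀ μ, (((Ac - μ • (1 : Matrix V V ℂ)) ^ (kk μ)).mulVec (c μ)) = 0 := fun μ => by
    rw [← end_sub_pow_apply]
    exact hkk μ
  have hre : ∀ μ ∈ c.support, μ.re ≤ lam := fun μ hμ =>
    hspec μ (isEig_of_genEig A (Finsupp.mem_support_iff.mp hμ) (hkmat μ))
  set K : ℕ := c.support.sup kk with hK
  set Cm : ℂ → ℝ := fun μ => ∑ n ∈ Finset.range (kk μ),
    ((n.factorial : ℝ))⁻¹ * ‖((Ac - μ • (1 : Matrix V V ℂ)) ^ n).mulVec (c μ) σ'‖ with hCm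
  have hCm0 : ∀ μ, 0 ≤ Cm μ := fun μ =>
    Finset.sum_nonneg fun n _ => mul_nonneg (by positivity) (norm_nonneg _)
  refine ⟨∑ μ ∈ c.support, Cm μ, K, Finset.sum_nonneg fun μ _ => hCm0 μ, ?_⟩
  intro t ht
  have hbase : 1 ≤ 1 + t := by linarith
  -- the real entry is bounded by the norm of the complex matrix-vector product
  have h2 : (exp (t • Ac)).mulVec w σ' = exp (t • Ac) σ' σ := by
    rw [hw]
    have := Matrix.mulVec_single (exp (t • Ac)) σ (1 : ℂ)
    rw [this]
    exact mul_one _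
  have h1 : exp (t • Ac) σ' σ = Complex.ofReal (exp (t • A) σ' σ) := by
    rw [hAc, ← map_ofReal_smul, ← map_ofReal_exp]
    rfl
  have hmain : exp (t • A) σ' σ ≤ ‖(exp (t • Ac)).mulVec w σ'‖ := by
    rw [h2, h1, Complex.norm_real]
    exact le_abs_self _
  -- decompose w into generalized eigenvectors
  have hdecomp : (exp (t • Ac)).mulVec w
      = ∑ μ ∈ c.support, (exp (t • Ac)).mulVec (c μ) := by
    conv_lhs => rw [← hcsum]
    rw [Finsupp.sum]
    calc (exp (t • Ac)).mulVec (∑ μ ∈ c.support, c μ)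
        = (exp (t • Ac)).mulVecLin (∑ μ ∈ c.support, c μ) :=
          (Matrix.mulVecLin_apply _ _).symm
      _ = ∑ μ ∈ c.support, (exp (t • Ac)).mulVecLin (c μ) := map_sum _ _ _
      _ = _ := by simp [Matrix.mulVecLin_apply]
  have hnorm : ‖(exp (t • Ac)).mulVec w σ'‖
      ≤ ∑ μ ∈ c.support, ‖(exp (t • Ac)).mulVec (c μ) σ'‖ := by
    rw [hdecomp]
    rw [Finset.sum_apply]
    exact norm_sum_le _ _
  have hterm : ∀ μ ∈ c.support,
      ‖(exp (t • Ac)).mulVec (c μ) σ'‖ ≤ Cm μ * (1 + t) ^ K * Real.exp (t * lam) := by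
    intro μ hμ
    have hexp : Real.exp (t * μ.re) ≤ Real.exp (t * lam) :=
      Real.exp_le_exp.mpr (mul_le_mul_of_nonneg_left (hre μ hμ) ht)
    have hsum : ∑ n ∈ Finset.range (kk μ), ((n.factorial : ℝ))⁻¹ * t ^ n *
          ‖((Ac - μ • (1 : Matrix V V ℂ)) ^ n).mulVec (c μ) σ'‖
        ≤ Cm μ * (1 + t) ^ K := by
      rw [hCm, Finset.sum_mul]
      apply Finset.sum_le_sum
      intro n hn
      have htn : t ^ n ≤ (1 + t) ^ K := by
        calc t ^ n ≤ (1 + t) ^ n := pow_le_pow_left₀ ht (by linarith) n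
          _ ≤ (1 + t) ^ K := pow_le_pow_right₀ hbase
            ((Nat.le_of_lt_succ (Nat.lt_succ_of_lt (Finset.mem_range.mp hn))).trans
              (Finset.le_sup hμ))
      calc ((n.factorial : ℝ))⁻¹ * t ^ n * ‖((Ac - μ • (1 : Matrix V V ℂ)) ^ n).mulVec (c μ) σ'‖
          = ((n.factorial : ℝ))⁻¹ * ‖((Ac - μ • (1 : Matrix V V ℂ)) ^ n).mulVec (c μ) σ'‖ * t ^ n := by
            ring
        _ ≤ ((n.factorial : ℝ))⁻¹ * ‖((Ac - μ • (1 : Matrix V V ℂ)) ^ n).mulVec (c μ) σ'‖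
              * (1 + t) ^ K := by
            refine mul_le_mul_of_nonneg_left htn ?_
            positivity
    refine (term_bound Ac μ (c μ) (hkmat μ) ht σ').trans ?_
    refine le_trans (mul_le_mul hexp hsum
      (Finset.sum_nonneg fun n _ => by positivity) (Real.exp_nonneg _)) (le_of_eq (by ring))
  calc exp (t • A) σ' σ ≤ ‖(exp (t • Ac)).mulVec w σ'‖ := hmain
    _ ≤ ∑ μ ∈ c.support, ‖(exp (t • Ac)).mulVec (c μ) σ'‖ := hnorm
    _ ≤ ∑ μ ∈ c.support, Cm μ * (1 + t) ^ K * Real.exp (t * lam) := Finset.sum_le_sum hterm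
    _ = (∑ μ ∈ c.support, Cm μ) * (1 + t) ^ K * Real.exp (t * lam) := by
        rw [← Finset.sum_mul, ← Finset.sum_mul]

end Complexify

section Integrals

lemma pow_le_factorial_mul_exp {u : ℝ} (hu : 0 ≤ u) (k : ℕ) :
    u ^ k ≤ k.factorial * Real.exp u := by
  have h1 : ∑ i ∈ Finset.range (k + 1), u ^ i / i.factorial ≤ Real.exp u :=
    Real.sum_le_exp_of_nonneg hu (k + 1)
  have h2 : u ^ k / k.factorial ≤ ∑ i ∈ Finset.range (k + 1), u ^ i / i.factorial := by
    refine Finset.single_le_sum (f := fun i => u ^ i / i.factorial) ?_ ?_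
    · intro i _
      positivity
    · exact Finset.self_mem_range_succ k
  have hkf : (0:ℝ) < k.factorial := by positivity
  rw [div_le_iff₀ hkf] at *
  calc u ^ k ≤ (∑ i ∈ Finset.range (k + 1), u ^ i / i.factorial) * k.factorial := h2
    _ ≤ Real.exp u * k.factorial := by
        refine mul_le_mul_of_nonneg_right h1 hkf.le
    _ = k.factorial * Real.exp u := by ring

lemma exp_entry_shift (A : Matrix V V ℝ) (r t : ℝ) (σ σ' : V) :
    exp (t • (A + r • (1 : Matrix V V ℝ))) σ' σ = Real.exp (t * r) * exp (t • A) σ' σ := by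
  have h : t • (A + r • (1 : Matrix V V ℝ)) = t • A + (t * r) • (1 : Matrix V V ℝ) := by
    rw [smul_add, smul_smul]
  rw [h, exp_add_smul_one, ← Real.exp_eq_exp_ℝ]
  rfl

lemma exp_entry_shift' (A : Matrix V V ℝ) (α t : ℝ) (σ σ' : V) :
    exp (t • (A - α • (1 : Matrix V V ℝ))) σ' σ = Real.exp (-(t * α)) * exp (t • A) σ' σ := by
  have h : A - α • (1 : Matrix V V ℝ) = A + (-α) • (1 : Matrix V V ℝ) := by
    rw [neg_smul, sub_eq_add_neg]
  rw [h, exp_entry_shift]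
  ring_nf

open MeasureTheory in
lemma lintegral_lt_top_of_gt (A : Matrix V V ℝ) (lam : ℝ)
    (hspec : ∀ μ : ℂ, A.IsComplexEigenvalue μ → μ.re ≤ lam) {α : ℝ} (hα : lam < α) (σ σ' : V) :
    (∫⁻ t in Ioi (0:ℝ),
        ENNReal.ofReal (exp (t • (A - α • (1 : Matrix V V ℝ))) σ' σ)) ≠ ∞ := by
  obtain ⟨C, K, hC, hb⟩ := entry_growth_bound A lam hspec σ σ'
  set δ : ℝ := α - lam with hδdef
  have hδ : 0 < δ := by rw [hδdef]; linarith
  set C2 : ℝ := C * ((2/δ) ^ K * K.factorial) * Real.exp (δ/2) with hC2def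
  have hpt : ∀ t ∈ Ioi (0:ℝ),
      ENNReal.ofReal (exp (t • (A - α • (1 : Matrix V V ℝ))) σ' σ)
        ≤ ENNReal.ofReal (C2 * Real.exp (-(δ/2) * t)) := by
    intro t ht
    have ht0 : (0:ℝ) ≤ t := (mem_Ioi.mp ht).le
    apply ENNReal.ofReal_le_ofReal
    rw [exp_entry_shift']
    have h1 : exp (t • A) σ' σ ≤ C * (1+t) ^ K * Real.exp (t * lam) := hb t ht0
    have hu : (0:ℝ) ≤ (δ/2) * (1+t) := by positivity
    have h2 : ((δ/2) * (1+t)) ^ K ≤ K.factorial * Real.exp ((δ/2) * (1+t)) :=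
      pow_le_factorial_mul_exp hu K
    have h3 : (1+t) ^ K ≤ (2/δ) ^ K * (K.factorial * Real.exp ((δ/2) * (1+t))) := by
      have he : (1+t) ^ K = (2/δ) ^ K * ((δ/2) * (1+t)) ^ K := by
        rw [← mul_pow]
        congr 1
        field_simp
      rw [he]
      exact mul_le_mul_of_nonneg_left h2 (by positivity)
    have hexps : Real.exp ((δ/2) * (1+t)) * Real.exp (-(t * α)) * Real.exp (t * lam)
        = Real.exp (δ/2) * Real.exp (-(δ/2) * t) := by
      rw [← Real.exp_add, ← Real.exp_add, ← Real.exp_add]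
      congr 1
      rw [hδdef]
      ring
    have hnn : (0:ℝ) ≤ Real.exp (-(t * α)) := Real.exp_nonneg _
    calc Real.exp (-(t * α)) * exp (t • A) σ' σ
        ≤ Real.exp (-(t * α)) * (C * (1+t) ^ K * Real.exp (t * lam)) :=
          mul_le_mul_of_nonneg_left h1 hnn
      _ = C * (1+t) ^ K * (Real.exp (-(t * α)) * Real.exp (t * lam)) := by ring
      _ ≤ C * ((2/δ) ^ K * (K.factorial * Real.exp ((δ/2) * (1+t))))
            * (Real.exp (-(t * α)) * Real.exp (t * lam)) := by
          refine mul_le_mul_of_nonneg_right (mul_le_mul_of_nonneg_left h3 hC) ?_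
          positivity
      _ = C * ((2/δ) ^ K * K.factorial)
            * (Real.exp ((δ/2) * (1+t)) * Real.exp (-(t * α)) * Real.exp (t * lam)) := by ring
      _ = C2 * Real.exp (-(δ/2) * t) := by rw [hexps, hC2def]; ring
  have hint : IntegrableOn (fun t => C2 * Real.exp (-(δ/2) * t)) (Ioi (0:ℝ)) volume := by
    exact (exp_neg_integrableOn_Ioi 0 (by positivity : (0:ℝ) < δ/2)).const_mul C2
  have hmono := lintegral_mono_ae (μ := volume.restrict (Ioi (0:ℝ)))
    ((ae_restrict_iff' measurableSet_Ioi).2 (ae_of_all volume hpt))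
  exact (lt_of_le_of_lt hmono hint.lintegral_lt_top).ne

end Integrals

section Divergence

open MeasureTheory

lemma measurable_exp_entry (B : Matrix V V ℝ) (σ σ' : V) :
    Measurable (fun t : ℝ => exp (t • B) σ' σ) := by
  have h1 : Continuous (fun t : ℝ => t • B) := continuous_id.smul continuous_const
  have h2 : Continuous (exp : Matrix V V ℝ → Matrix V V ℝ) := exp_continuous
  have h3 : Continuous (fun X : Matrix V V ℝ => X σ' σ) :=
    (continuous_apply σ).comp (continuous_apply (A := fun _ : V => V → ℝ) σ')
  exact ((h3.comp h2).comp h1).measurable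

set_option maxHeartbeats 1000000 in
lemma lintegral_eq_top_of_le (A : Matrix V V ℝ) (lam : ℝ)
    (hMetzler : A.IsMetzler) (hirr : A.IsIrreducibleMetzlerChain)
    (hPerron : ∃ v : V → ℝ, v ≠ 0 ∧ A.mulVec v = lam • v) {α : ℝ} (hα : α ≤ lam) (σ σ' : V) :
    (∫⁻ t in Ioi (0:ℝ),
        ENNReal.ofReal (exp (t • (A - α • (1 : Matrix V V ℝ))) σ' σ)) = ∞ := by
  classical
  set B : Matrix V V ℝ := A - α • (1 : Matrix V V ℝ) with hB
  set c : ℝ := ∑ τ : V, |A τ τ| with hc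
  set A' : Matrix V V ℝ := A + c • (1 : Matrix V V ℝ) with hA'
  have hcle : ∀ τ : V, |A τ τ| ≤ c :=
    fun τ => Finset.single_le_sum (f := fun τ => |A τ τ|) (fun i _ => abs_nonneg _)
      (Finset.mem_univ τ)
  have hA'entry : ∀ i j, A' i j = A i j + c * (if i = j then (1:ℝ) else 0) := by
    intro i j
    rw [hA']
    simp [Matrix.add_apply, Matrix.smul_apply, Matrix.one_apply, smul_eq_mul]
  have hA'nonneg : ∀ i j, 0 ≤ A' i j := by
    intro i j
    rw [hA'entry]
    rcases eq_or_ne i j with rfl | hij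
    · rw [if_pos rfl, mul_one]
      have := hcle i
      have := abs_nonneg (A i i)
      have := neg_abs_le (A i i)
      linarith
    · simp only [if_neg hij, mul_zero, add_zero]
      exact hMetzler j i (Ne.symm hij)
  have hA'chain : ∀ x y : V, x ≠ y →
      Relation.TransGen (fun a b : V => a ≠ b ∧ 0 < A' b a) x y := by
    intro x y hxy
    refine Relation.TransGen.mono ?_ _ _ (hirr x y hxy)
    intro a b hab
    refine ⟨hab.1, ?_⟩
    rw [hA'entry, if_neg (Ne.symm hab.1), mul_zero, add_zero]
    exact hab.2
  -- exp (t • B) in terms of exp (t • A')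
  have hBA' : B = A' + (-(c + α)) • (1 : Matrix V V ℝ) := by
    rw [hB, hA']
    ext i j
    simp only [Matrix.add_apply, Matrix.sub_apply, Matrix.smul_apply, smul_eq_mul]
    ring
  have hBentry : ∀ (t : ℝ) (i j : V),
      exp (t • B) i j = Real.exp (t * (-(c + α))) * exp (t • A') i j := by
    intro t i j
    rw [hBA']
    exact exp_entry_shift A' (-(c + α)) t j i
  have hAentry : ∀ (t : ℝ) (i j : V),
      exp (t • A) i j = Real.exp (t * (-c)) * exp (t • A') i j := by
    intro t i j
    have : A = A' + (-c) • (1 : Matrix V V ℝ) := by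
      rw [hA']
      ext a b
      simp only [Matrix.add_apply, Matrix.smul_apply, smul_eq_mul]
      ring
    rw [this]
    exact exp_entry_shift A' (-c) t j i
  have hA'exp_nonneg : ∀ (t : ℝ), 0 ≤ t → ∀ i j, 0 ≤ exp (t • A') i j := by
    intro t ht i j
    have hsm : ∀ a b, 0 ≤ (t • A') a b := by
      intro a b
      have : (t • A') a b = t * A' a b := rfl
      rw [this]
      exact mul_nonneg ht (hA'nonneg a b)
    exact exp_entry_nonneg hsm i j
  have hBexp_nonneg : ∀ (t : ℝ), 0 ≤ t → ∀ i j, 0 ≤ exp (t • B) i j := by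
    intro t ht i j
    rw [hBentry]
    exact mul_nonneg (Real.exp_nonneg _) (hA'exp_nonneg t ht i j)
  have hBexp_pos : ∀ (t : ℝ), 0 < t → ∀ i j, 0 < exp (t • B) j i := by
    intro t ht i j
    rw [hBentry]
    exact mul_pos (Real.exp_pos _) (exp_entry_pos hA'nonneg hA'chain ht i j)
  have hmeasB : ∀ i j, Measurable (fun t : ℝ => ENNReal.ofReal (exp (t • B) j i)) :=
    fun i j => (measurable_exp_entry B i j).ennreal_ofReal
  -- Step 1: the row sums at the eigen-row are bounded below
  obtain ⟨v, hv0, hv⟩ := hPerron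
  obtain ⟨σ'₀, hσ'₀⟩ := Function.ne_iff.mp hv0
  have hσ'₀' : v σ'₀ ≠ 0 := hσ'₀
  set mv : ℝ := ∑ τ : V, |v τ| with hmv
  have hmvpos : 0 < mv := by
    have h1 : |v σ'₀| ≤ mv :=
      Finset.single_le_sum (f := fun τ => |v τ|) (fun i _ => abs_nonneg _) (Finset.mem_univ σ'₀)
    have : 0 < |v σ'₀| := abs_pos.mpr hσ'₀'
    linarith
  have hle_mv : ∀ τ : V, |v τ| ≤ mv :=
    fun τ => Finset.single_le_sum (f := fun τ => |v τ|) (fun i _ => abs_nonneg _)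
      (Finset.mem_univ τ)
  have hrowsum : ∀ t : ℝ, 0 ≤ t →
      |v σ'₀| / mv ≤ ∑ σf : V, exp (t • B) σ'₀ σf := by
    intro t ht
    have hE0 : ∀ i j, 0 ≤ exp (t • A) i j := by
      intro i j
      rw [hAentry]
      exact mul_nonneg (Real.exp_nonneg _) (hA'exp_nonneg t ht i j)
    have heigt : (t • A).mulVec v = (t * lam) • v := by
      rw [Matrix.smul_mulVec, hv, smul_smul]
    have heig : (exp (t • A)).mulVec v = Real.exp (t * lam) • v := by
      rw [exp_mulVec_eigen (t • A) v (t * lam) heigt, Real.exp_eq_exp_ℝ]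
    have h1 : Real.exp (t * lam) * |v σ'₀| = |((exp (t • A)).mulVec v) σ'₀| := by
      rw [heig]
      have : (Real.exp (t * lam) • v) σ'₀ = Real.exp (t * lam) * v σ'₀ := rfl
      rw [this, abs_mul, abs_of_pos (Real.exp_pos _)]
    have h2 : |((exp (t • A)).mulVec v) σ'₀| ≤ (∑ σf : V, exp (t • A) σ'₀ σf) * mv := by
      have hexpand : ((exp (t • A)).mulVec v) σ'₀ = ∑ σf : V, exp (t • A) σ'₀ σf * v σf := rfl
      rw [hexpand, Finset.sum_mul]
      refine (Finset.abs_sum_le_sum_abs _ _).trans ?_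
      refine Finset.sum_le_sum fun σf _ => ?_
      rw [abs_mul, abs_of_nonneg (hE0 _ _)]
      exact mul_le_mul_of_nonneg_left (hle_mv σf) (hE0 _ _)
    have h3 : Real.exp (t * lam) * (|v σ'₀| / mv) ≤ ∑ σf : V, exp (t • A) σ'₀ σf := by
      rw [← mul_div_assoc, div_le_iff₀ hmvpos]
      rw [h1]
      exact h2
    have h4 : ∑ σf : V, exp (t • B) σ'₀ σf
        = Real.exp (-(t * α)) * ∑ σf : V, exp (t • A) σ'₀ σf := by
      rw [Finset.mul_sum]
      refine Finset.sum_congr rfl fun σf _ => ?_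
      rw [hBentry, hAentry, ← mul_assoc, ← Real.exp_add]
      congr 1
      ring
    rw [h4]
    calc |v σ'₀| / mv ≤ Real.exp (t * (lam - α)) * (|v σ'₀| / mv) := by
          refine le_mul_of_one_le_left (by positivity) ?_
          refine Real.one_le_exp ?_
          have : 0 ≤ lam - α := by linarith
          positivity
      _ = Real.exp (-(t * α)) * (Real.exp (t * lam) * (|v σ'₀| / mv)) := by
          rw [← mul_assoc, ← Real.exp_add]
          congr 2
          ring
      _ ≤ Real.exp (-(t * α)) * ∑ σf : V, exp (t • A) σ'₀ σf :=
          mul_le_mul_of_nonneg_left h3 (Real.exp_nonneg _)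
  -- Step 2: some column gives an infinite integral in row σ'₀
  have hsum_top : ∃ σ₀ : V,
      (∫⁻ t in Ioi (0:ℝ), ENNReal.ofReal (exp (t • B) σ'₀ σ₀)) = ∞ := by
    by_contra hcon
    push_neg at hcon
    have hfin : (∑ σf : V, ∫⁻ t in Ioi (0:ℝ), ENNReal.ofReal (exp (t • B) σ'₀ σf)) < ∞ :=
      ENNReal.sum_lt_top.mpr fun σf _ => (hcon σf).lt_top
    have hswap : (∫⁻ t in Ioi (0:ℝ), ∑ σf : V, ENNReal.ofReal (exp (t • B) σ'₀ σf))
        = ∑ σf : V, ∫⁻ t in Ioi (0:ℝ), ENNReal.ofReal (exp (t • B) σ'₀ σf) :=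
      lintegral_finset_sum' Finset.univ fun σf _ => (hmeasB σf σ'₀).aemeasurable
    have hlower : (∫⁻ t in Ioi (0:ℝ), ENNReal.ofReal (|v σ'₀| / mv))
        ≤ ∫⁻ t in Ioi (0:ℝ), ∑ σf : V, ENNReal.ofReal (exp (t • B) σ'₀ σf) := by
      refine lintegral_mono_ae (μ := volume.restrict (Ioi (0:ℝ)))
        ((ae_restrict_iff' measurableSet_Ioi).2 (ae_of_all volume ?_))
      intro t ht
      have ht0 : (0:ℝ) ≤ t := (mem_Ioi.mp ht).le
      calc ENNReal.ofReal (|v σ'₀| / mv)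
          ≤ ENNReal.ofReal (∑ σf : V, exp (t • B) σ'₀ σf) :=
            ENNReal.ofReal_le_ofReal (hrowsum t ht0)
        _ = ∑ σf : V, ENNReal.ofReal (exp (t • B) σ'₀ σf) :=
            ENNReal.ofReal_sum_of_nonneg fun σf _ => hBexp_nonneg t ht0 σ'₀ σf
    have hconst : (∫⁻ t in Ioi (0:ℝ), ENNReal.ofReal (|v σ'₀| / mv)) = ∞ := by
      rw [setLIntegral_const, Real.volume_Ioi, ENNReal.mul_top]
      exact (ENNReal.ofReal_pos.mpr (by positivity)).ne'
    rw [hconst] at hlower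
    rw [hswap] at hlower
    exact absurd (eq_top_iff.mpr hlower) hfin.ne
  obtain ⟨σ₀, hσ₀top⟩ := hsum_top
  -- Step 3: transfer to the pair (σ, σ')
  set c1 : ℝ := exp ((1:ℝ) • B) σ' σ'₀ with hc1
  set c2 : ℝ := exp ((1:ℝ) • B) σ₀ σ with hc2
  have hc1pos : 0 < c1 := hBexp_pos 1 one_pos σ'₀ σ'
  have hc2pos : 0 < c2 := hBexp_pos 1 one_pos σ σ₀
  have htriple : ∀ t : ℝ, 0 < t →
      c1 * (exp (t • B) σ'₀ σ₀ * c2) ≤ exp ((t + 2) • B) σ' σ := by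
    intro t ht
    have hsplit : (t + 2) • B = (1:ℝ) • B + (t • B + (1:ℝ) • B) := by
      rw [← add_smul, ← add_smul]
      congr 1
      ring
    have hcomm1 : Commute (t • B) ((1:ℝ) • B) :=
      ((Commute.refl B).smul_left t).smul_right (1:ℝ)
    have hcomm2 : Commute ((1:ℝ) • B) (t • B + (1:ℝ) • B) :=
      (((Commute.refl B).smul_left (1:ℝ)).smul_right t).add_right
        (((Commute.refl B).smul_left (1:ℝ)).smul_right (1:ℝ))
    have hexp_split : exp ((t + 2) • B)
        = exp ((1:ℝ) • B) * (exp (t • B) * exp ((1:ℝ) • B)) := by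
      rw [hsplit, Matrix.exp_add_of_commute _ _ hcomm2, Matrix.exp_add_of_commute _ _ hcomm1]
    rw [hexp_split]
    have h1nn : ∀ i j, 0 ≤ exp ((1:ℝ) • B) i j := hBexp_nonneg 1 zero_le_one
    have hYnn : ∀ i j, 0 ≤ exp (t • B) i j := hBexp_nonneg t ht.le
    have hYZnn : ∀ i j, 0 ≤ (exp (t • B) * exp ((1:ℝ) • B)) i j :=
      fun i j => mul_entry_nonneg hYnn h1nn i j
    have step1 : exp (t • B) σ'₀ σ₀ * c2 ≤ (exp (t • B) * exp ((1:ℝ) • B)) σ'₀ σ :=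
      mul_entry_le hYnn h1nn σ'₀ σ₀ σ
    have step2 : c1 * (exp (t • B) * exp ((1:ℝ) • B)) σ'₀ σ
        ≤ (exp ((1:ℝ) • B) * (exp (t • B) * exp ((1:ℝ) • B))) σ' σ :=
      mul_entry_le h1nn hYZnn σ' σ'₀ σ
    calc c1 * (exp (t • B) σ'₀ σ₀ * c2)
        ≤ c1 * (exp (t • B) * exp ((1:ℝ) • B)) σ'₀ σ :=
          mul_le_mul_of_nonneg_left step1 hc1pos.le
      _ ≤ _ := step2
  have hshift : (∫⁻ t in Ioi (2:ℝ), ENNReal.ofReal (exp (t • B) σ' σ))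
      = ∫⁻ t in Ioi (0:ℝ), ENNReal.ofReal (exp ((t + 2) • B) σ' σ) := by
    have hmp := measurePreserving_add_right (volume : Measure ℝ) 2
    have hme : MeasurableEmbedding (fun t : ℝ => t + 2) :=
      (MeasurableEquiv.addRight (2:ℝ)).measurableEmbedding
    have h := hmp.setLIntegral_comp_preimage_emb hme
      (fun t => ENNReal.ofReal (exp (t • B) σ' σ)) (Ioi (2:ℝ))
    rw [show (fun t : ℝ => t + 2) ⁻¹' (Ioi (2:ℝ)) = Ioi (0:ℝ) by
      ext x
      simp] at h
    exact h.symm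
  have hmono2 : (∫⁻ t in Ioi (2:ℝ), ENNReal.ofReal (exp (t • B) σ' σ))
      ≤ ∫⁻ t in Ioi (0:ℝ), ENNReal.ofReal (exp (t • B) σ' σ) :=
    lintegral_mono' (Measure.restrict_mono (Ioi_subset_Ioi (by norm_num)) le_rfl) le_rfl
  have hptw : ∀ t ∈ Ioi (0:ℝ),
      ENNReal.ofReal (c1 * c2) * ENNReal.ofReal (exp (t • B) σ'₀ σ₀)
        ≤ ENNReal.ofReal (exp ((t + 2) • B) σ' σ) := by
    intro t ht
    rw [← ENNReal.ofReal_mul (by positivity)]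
    refine ENNReal.ofReal_le_ofReal ?_
    calc c1 * c2 * exp (t • B) σ'₀ σ₀ = c1 * (exp (t • B) σ'₀ σ₀ * c2) := by ring
      _ ≤ _ := htriple t (mem_Ioi.mp ht)
  have hge : ENNReal.ofReal (c1 * c2) * (∫⁻ t in Ioi (0:ℝ),
        ENNReal.ofReal (exp (t • B) σ'₀ σ₀))
      ≤ ∫⁻ t in Ioi (0:ℝ), ENNReal.ofReal (exp ((t + 2) • B) σ' σ) := by
    rw [← lintegral_const_mul' _ _ ENNReal.ofReal_ne_top]
    exact lintegral_mono_ae (μ := volume.restrict (Ioi (0:ℝ)))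
      ((ae_restrict_iff' measurableSet_Ioi).2 (ae_of_all volume hptw))
  rw [hσ₀top, ENNReal.mul_top (ENNReal.ofReal_pos.mpr (mul_pos hc1pos hc2pos)).ne'] at hge
  have h2top : (∫⁻ t in Ioi (2:ℝ), ENNReal.ofReal (exp (t • B) σ' σ)) = ∞ := by
    rw [hshift]
    exact top_le_iff.mp hge
  refine eq_top_iff.mpr ?_
  calc (⊤ : ℝ≥0∞) = _ := h2top.symm
    _ ≤ _ := hmono2

end Divergence

theorem main {V : Type*} [Fintype V] [DecidableEq V] [Nonempty V]
    (A : Matrix V V ℝ) (lam : ℝ)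
    (hMetzler : A.IsMetzler) (hirr : A.IsIrreducibleMetzlerChain)
    (hPerron : A.IsPerronRoot lam) :
    ∀ (α : ℝ) (σ σ' : V),
      (∫⁻ t in Set.Ioi (0 : ℝ),
          ENNReal.ofReal ((NormedSpace.exp (t • (A - α • (1 : Matrix V V ℝ)))) σ' σ)) = ∞
        ↔ α ≤ lam := by
  intro α σ σ'
  constructor
  · intro h
    by_contra hgt
    push_neg at hgt
    exact lintegral_lt_top_of_gt A lam hPerron.2 hgt σ σ' h
  · intro hle
    exact lintegral_eq_top_of_le A lam hMetzler hirr hPerron.1 hle σ σ'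

end ResolventAux



/-- **Resolvent divergence criterion for the Lyapunov exponent.** For an
irreducible Metzler matrix `A` with Perron root `lam`, the entrywise integral
`∫₀^∞ (exp (t (A − α)))_{σ',σ} dt` diverges if and only if `α ≤ lam`, for every
`α` and every pair of indices. -/
theorem resolvent_divergence_criterion {V : Type*} [Fintype V] [DecidableEq V] [Nonempty V]
    (A : Matrix V V ℝ) (lam : ℝ)
    (hMetzler : A.IsMetzler) (hirr : A.IsIrreducibleMetzlerChain)
    (hPerron : A.IsPerronRoot lam) :
    ∀ (α : ℝ) (σ σ' : V),
      (∫⁻ t in Set.Ioi (0 : ℝ),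
          ENNReal.ofReal ((NormedSpace.exp (t • (A - α • (1 : Matrix V V ℝ)))) σ' σ)) = ∞
        ↔ α ≤ lam :=
  ResolventAux.main A lam hMetzler hirr hPerron
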